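/- arXiv:1409.1672 — 4 statements merged into one kernel-verified Lean document; each statement's English description precedes it below -/
import Mathlib

section
/- Orthogonal decomposition: Let b be a symmetric bilinear form on a finitely generated module M over a commutative real Riesz algebra R, and let N = {x ∈ M : b(x,x) ∉ R^×}. If N is a proper submodule of M, then there exist x₁, ..., x_k ∈ M with each b(x_i, x_i) invertible in R, such that M = Rx₁ ⊥ ... ⊥ Rx_k ⊥ N, i.e., M is the direct sum of the cyclic submodules Rx_i and N, and these summands are pairwise b-orthogonal. -/
open Matrix

/-- `a` is strictly positive: nonnegative, nonzero and invertible. -/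
def SPos {R : Type*} [Ring R] [PartialOrder R] (a : R) : Prop :=
  0 ≤ a ∧ a ≠ 0 ∧ IsUnit a

/-- A Riesz algebra: a partially ordered, strictly archimedean, lattice-ordered
commutative ℝ-algebra. -/
class RieszAlgebra (R : Type*) extends CommRing R, Lattice R, Algebra ℝ R where
  add_le_add_left : ∀ a b : R, a ≤ b → ∀ c : R, c + a ≤ c + b
  mul_nonneg : ∀ a b : R, 0 ≤ a → 0 ≤ b → 0 ≤ a * b
  sq_nonneg : ∀ a : R, 0 ≤ a * a
  smul_nonneg : ∀ (t : ℝ) (a : R), 0 ≤ t → 0 ≤ a → 0 ≤ t • a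
  strictly_archimedean : ∀ a b : R, (∀ t : ℝ, SPos (a - t • b)) → b = 0

/-- A real Riesz algebra: every strictly positive element has a (unique) strictly
positive square root. -/
class RealRieszAlgebra (R : Type*) extends RieszAlgebra R where
  sqrt : R → R
  sqrt_spos : ∀ a : R, SPos a → SPos (sqrt a)
  sqrt_sq : ∀ a : R, SPos a → sqrt a * sqrt a = a
  sqrt_unique : ∀ a b : R, SPos a → SPos b → b * b = a → b = sqrt a

namespace RRAux

variable {R : Type*} [RealRieszAlgebra R]

lemma sub_nonneg' {a b : R} (h : a ≤ b) : 0 ≤ b - a := by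
  have := RieszAlgebra.add_le_add_left a b h (-a)
  simpa [neg_add_cancel, ← sub_eq_neg_add] using this

lemma le_of_sub_nonneg {a b : R} (h : 0 ≤ b - a) : a ≤ b := by
  have := RieszAlgebra.add_le_add_left 0 (b - a) h a
  simpa using this

lemma add_nonneg' {a b : R} (ha : 0 ≤ a) (hb : 0 ≤ b) : 0 ≤ a + b := by
  have := RieszAlgebra.add_le_add_left 0 b hb a
  simp only [add_zero] at this
  exact le_trans ha this

lemma one_nonneg : (0:R) ≤ 1 := by
  simpa using RieszAlgebra.sq_nonneg (1:R)

lemma alg_nonneg {t : ℝ} (ht : 0 ≤ t) : (0:R) ≤ algebraMap ℝ R t := by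
  have := RieszAlgebra.smul_nonneg t (1:R) ht one_nonneg
  rwa [Algebra.smul_def, mul_one] at this

lemma alg_mono {s t : ℝ} (h : s ≤ t) : (algebraMap ℝ R s) ≤ algebraMap ℝ R t :=
  le_of_sub_nonneg (by rw [← _root_.map_sub]; exact alg_nonneg (by linarith))

lemma smul_as_mul (t : ℝ) (a : R) : t • a = algebraMap ℝ R t * a := Algebra.smul_def t a

lemma mul_le_mul_left' {a b : R} (h : a ≤ b) {c : R} (hc : 0 ≤ c) : c * a ≤ c * b :=
  le_of_sub_nonneg (by rw [← mul_sub]; exact RieszAlgebra.mul_nonneg _ _ hc (sub_nonneg' h))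

lemma alg_unit {t : ℝ} (ht : t ≠ 0) : IsUnit (algebraMap ℝ R t) :=
  IsUnit.of_mul_eq_one (algebraMap ℝ R t⁻¹) (by rw [← _root_.map_mul, mul_inv_cancel₀ ht, _root_.map_one])

lemma nontriv (h0 : ¬IsUnit (0:R)) : Nontrivial R :=
  ⟨⟨0, 1, fun h => h0 (by rw [h]; exact isUnit_one)⟩⟩

lemma nonunit_mul (a : R) {m : R} (hm : ¬IsUnit m) : ¬IsUnit (a * m) :=
  fun h => hm (isUnit_of_mul_isUnit_right h)

lemma nonunit_neg {m : R} (hm : ¬IsUnit m) : ¬IsUnit (-m) :=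
  fun h => hm (by simpa using h.neg)

section withHyp

variable (hadd : ∀ a b : R, ¬IsUnit a → ¬IsUnit b → ¬IsUnit (a + b))

include hadd

lemma nonunit_sub {a b : R} (ha : ¬IsUnit a) (hb : ¬IsUnit b) : ¬IsUnit (a - b) := by
  rw [sub_eq_add_neg]; exact hadd _ _ ha (nonunit_neg hb)

lemma unit_real_add {t : ℝ} (ht : t ≠ 0) {μ : R} (hμ : ¬IsUnit μ) :
    IsUnit (algebraMap ℝ R t + μ) := by
  by_contra h
  have h2 : ¬IsUnit (algebraMap ℝ R t) := by
    have := nonunit_sub hadd h hμ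
    simpa using this
  exact h2 (alg_unit ht)

end withHyp


section withHyp2

variable (hadd : ∀ a b : R, ¬IsUnit a → ¬IsUnit b → ¬IsUnit (a + b))
variable (h0 : ¬IsUnit (0:R))

include hadd h0

lemma mul_left_cancel₀' {x y : R} (hx : IsUnit x) (h : x * y = 0) : y = 0 := by
  rcases hx.exists_left_inv with ⟨w, hw⟩
  calc y = (w * x) * y := by rw [hw, one_mul]
    _ = w * (x * y) := by ring
    _ = 0 := by rw [h, mul_zero]

lemma eq_zero_of_sq_zero {m : R} (hm : ¬IsUnit m) (h2 : m * m = 0) : m = 0 := by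
  haveI := nontriv h0
  apply RieszAlgebra.strictly_archimedean 1 m
  intro t
  have key : (1 : R) - t • m = (1 - (t/2) • m) * (1 - (t/2) • m) := by
    rw [smul_as_mul, smul_as_mul]
    have h2' : algebraMap ℝ R (t/2) + algebraMap ℝ R (t/2) = algebraMap ℝ R t := by
      rw [← _root_.map_add]; norm_num
    linear_combination (-(algebraMap ℝ R (t/2) * algebraMap ℝ R (t/2))) * h2 + m * h2'
  have hu : IsUnit ((1:R) - t • m) := by
    have e : (1:R) - t • m = algebraMap ℝ R 1 + (-(algebraMap ℝ R t * m)) := by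
      rw [smul_as_mul, _root_.map_one]; ring
    rw [e]
    exact unit_real_add hadd one_ne_zero (nonunit_neg (nonunit_mul _ hm))
  exact ⟨key ▸ RieszAlgebra.sq_nonneg _, hu.ne_zero, hu⟩

lemma dichotomy {P : R} (hP : ¬IsUnit P) (hP0 : 0 ≤ P) {lam : ℝ} (hl : 0 < lam) :
    P ≤ algebraMap ℝ R lam ∨ algebraMap ℝ R lam ≤ P := by
  haveI := nontriv h0
  set L : R := algebraMap ℝ R lam with hL
  have e2 : algebraMap ℝ R (2*lam) = L + L := by rw [two_mul, _root_.map_add]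
  set A : R := (P - L) * (P - L) with hA
  have hAunit : IsUnit A := by
    have hμ : ¬IsUnit (P * P - algebraMap ℝ R (2*lam) * P) := by
      have e : P * P - algebraMap ℝ R (2*lam) * P = (P - algebraMap ℝ R (2*lam)) * P := by ring
      rw [e]; exact nonunit_mul _ hP
    have hkey : A = algebraMap ℝ R (lam*lam) + (P*P - algebraMap ℝ R (2*lam) * P) := by
      rw [hA, _root_.map_mul, e2, ← hL]; ring
    rw [hkey]; exact unit_real_add hadd (by positivity) hμ
  have hAs : SPos A := ⟨hA ▸ RieszAlgebra.sq_nonneg (P - L), hAunit.ne_zero, hAunit⟩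
  set z := RealRieszAlgebra.sqrt A with hz
  have hzs : SPos z := RealRieszAlgebra.sqrt_spos A hAs
  have hzz : z * z = A := RealRieszAlgebra.sqrt_sq A hAs
  have hnon : ¬ (IsUnit (z - L) ∧ IsUnit (z + L)) := by
    rintro ⟨h1, h2⟩
    have hfac : (z - L) * (z + L) = A - L * L := by
      have e : (z - L) * (z + L) = z*z - L*L := by ring
      rw [e, hzz]
    have hu : IsUnit (A - L*L) := hfac ▸ h1.mul h2
    have e : A - L*L = (P - (L+L)) * P := by rw [hA]; ring
    rw [e] at hu
    exact (nonunit_mul _ hP) hu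
  have hzero : (z - (P - L)) * (z + (P - L)) = 0 := by
    have e : (z - (P - L)) * (z + (P - L)) = z*z - (P - L)*(P-L) := by ring
    rw [e, hzz, ← hA, sub_self]
  rcases not_and_or.mp hnon with h1 | h2
  · -- z - L nonunit : conclude P ≤ L
    have hun : IsUnit (z - (P - L)) := by
      have e : z - (P - L) = algebraMap ℝ R (2*lam) + ((z - L) - P) := by
        rw [e2]; ring
      rw [e]; exact unit_real_add hadd (by positivity) (nonunit_sub hadd h1 hP)
    have hz0 : z + (P - L) = 0 := mul_left_cancel₀' hadd h0 hun hzero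
    left
    have hz' : L - P = z := by linear_combination -hz0
    exact le_of_sub_nonneg (hz' ▸ hzs.1)
  · -- z + L nonunit : conclude L ≤ P
    have hun : IsUnit (z + (P - L)) := by
      have e : z + (P - L) = algebraMap ℝ R (-(2*lam)) + ((z + L) + P) := by
        rw [_root_.map_neg, e2]; ring
      rw [e]
      exact unit_real_add hadd (neg_ne_zero.mpr (by positivity)) (hadd _ _ h2 hP)
    have hzero2 : (z + (P - L)) * (z - (P - L)) = 0 := by rw [mul_comm]; exact hzero
    have hz0 : z - (P - L) = 0 := mul_left_cancel₀' hadd h0 hun hzero2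
    right
    have hz' : P - L = z := by linear_combination -hz0
    exact le_of_sub_nonneg (hz' ▸ hzs.1)


lemma build_s {P : R} (hP : ¬IsUnit P) {γ : ℝ} (hγ : 0 < γ)
    (hlow : algebraMap ℝ R γ ≤ P) :
    ∃ s : R, 0 ≤ s ∧ (∀ t : ℝ, IsUnit (algebraMap ℝ R t + s)) := by
  haveI := nontriv h0
  set E : R := algebraMap ℝ R (2/γ) * P - 1 with hE
  have h1E : ¬IsUnit (1 + E) := by
    have e : 1 + E = algebraMap ℝ R (2/γ) * P := by rw [hE]; ring
    rw [e]; exact nonunit_mul _ hP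
  have hE0 : 0 ≤ E := by
    have h1 : algebraMap ℝ R (2/γ) * algebraMap ℝ R γ ≤ algebraMap ℝ R (2/γ) * P :=
      mul_le_mul_left' hlow (alg_nonneg (by positivity))
    have h2 : algebraMap ℝ R (2/γ) * algebraMap ℝ R γ = (1:R) + 1 := by
      rw [← _root_.map_mul]
      have : (2/γ) * γ = 2 := by field_simp
      rw [this, show (2:ℝ) = 1+1 by norm_num, _root_.map_add, _root_.map_one]
    have h3 : (1:R) + 1 ≤ algebraMap ℝ R (2/γ) * P := h2 ▸ h1
    have h4 : (0:R) ≤ algebraMap ℝ R (2/γ) * P - (1+1) := sub_nonneg' h3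
    have e : E = (algebraMap ℝ R (2/γ) * P - (1+1)) + 1 := by rw [hE]; ring
    rw [e]; exact add_nonneg' h4 one_nonneg
  have hsinU : IsUnit (E + algebraMap ℝ R (1/2)) := by
    have hu := unit_real_add hadd (show (-(1/2) : ℝ) ≠ 0 by norm_num) h1E
    have heq : algebraMap ℝ R (-(1/2)) + (1+E) = E + algebraMap ℝ R (1/2) := by
      have e : algebraMap ℝ R (-(1/2) : ℝ) = algebraMap ℝ R (1/2) - 1 := by
        rw [show (-(1/2) : ℝ) = 1/2 - 1 by norm_num, _root_.map_sub, _root_.map_one]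
      rw [e]; ring
    rwa [heq] at hu
  have hsin : SPos (E + algebraMap ℝ R (1/2)) :=
    ⟨add_nonneg' hE0 (alg_nonneg (by norm_num)), hsinU.ne_zero, hsinU⟩
  set s := RealRieszAlgebra.sqrt (E + algebraMap ℝ R (1/2)) with hs
  have hss : SPos s := RealRieszAlgebra.sqrt_spos _ hsin
  have hs2 : s * s = E + algebraMap ℝ R (1/2) := RealRieszAlgebra.sqrt_sq _ hsin
  refine ⟨s, hss.1, ?_⟩
  intro t
  by_contra hn
  have key : algebraMap ℝ R (t^2 + 1/2) =
      (1 + E) + (algebraMap ℝ R (2*t)) * (algebraMap ℝ R t + s)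
        - (algebraMap ℝ R t + s) * (algebraMap ℝ R t + s) := by
    have m1 : algebraMap ℝ R t * algebraMap ℝ R t = algebraMap ℝ R (t*t) := (_root_.map_mul _ _ _).symm
    have m2 : algebraMap ℝ R (2*t) = algebraMap ℝ R t + algebraMap ℝ R t := by
      rw [two_mul, _root_.map_add]
    have m3 : algebraMap ℝ R (t^2 + 1/2) = algebraMap ℝ R (t*t) + algebraMap ℝ R (1/2) := by
      rw [← _root_.map_add]; ring_nf
    have m4 : algebraMap ℝ R (1/2) + algebraMap ℝ R (1/2) = 1 := by
      rw [← _root_.map_add]; norm_num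
    rw [m3, m2, ← m1]
    linear_combination hs2 + m4
  have hU : IsUnit (algebraMap ℝ R (t^2+1/2)) := alg_unit (by positivity)
  rw [key] at hU
  have hnon : ¬IsUnit ((1 + E) + (algebraMap ℝ R (2*t)) * (algebraMap ℝ R t + s)
      - (algebraMap ℝ R t + s) * (algebraMap ℝ R t + s)) := by
    rw [sub_eq_add_neg]
    exact hadd _ _ (hadd _ _ h1E (nonunit_mul _ hn)) (nonunit_neg (nonunit_mul _ hn))
  exact hnon hU

lemma nonunit_eq_zero {m : R} (hm : ¬IsUnit m) : m = 0 := by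
  haveI := nontriv h0
  set P := m * m with hPdef
  have hP : ¬IsUnit P := fun h => hm (isUnit_of_mul_isUnit_left h)
  have hP0 : 0 ≤ P := RieszAlgebra.sq_nonneg m
  have hbound : ∃ lam : ℝ, 0 < lam ∧ P ≤ algebraMap ℝ R lam := by
    by_contra hc
    push_neg at hc
    have hlow : ∀ lam : ℝ, 0 < lam → algebraMap ℝ R lam ≤ P := fun lam hl =>
      (dichotomy hadd h0 hP hP0 hl).resolve_left (by
        intro hle
        exact absurd hle (hc lam hl))
    obtain ⟨s, hs0, hsu⟩ := build_s hadd h0 hP (by norm_num : (0:ℝ) < 1) (by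
      simpa using hlow 1 one_pos)
    have harch := RieszAlgebra.strictly_archimedean (P + s) 1 ?_
    · exact one_ne_zero harch
    intro t
    have hunit : IsUnit (P + s - t • (1:R)) := by
      by_contra hn
      have h1 : ¬IsUnit ((P + s - t • (1:R)) - P) := nonunit_sub hadd hn hP
      have e : (P + s - t • (1:R)) - P = algebraMap ℝ R (-t) + s := by
        rw [smul_as_mul, _root_.map_neg, mul_one]; ring
      rw [e] at h1; exact h1 (hsu (-t))
    refine ⟨?_, hunit.ne_zero, hunit⟩
    rcases le_or_gt t 0 with ht | ht
    · have e : P + s - t • (1:R) = (P + s) + algebraMap ℝ R (-t) := by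
        rw [smul_as_mul, _root_.map_neg, mul_one]; ring
      rw [e]; exact add_nonneg' (add_nonneg' hP0 hs0) (alg_nonneg (by linarith))
    · have h2t := hlow (2*t) (by linarith)
      have e : P + s - t • (1:R) =
          (P - algebraMap ℝ R (2*t)) + (s + algebraMap ℝ R t) := by
        rw [smul_as_mul, mul_one]
        have e2 : algebraMap ℝ R (2*t) = algebraMap ℝ R t + algebraMap ℝ R t := by
          rw [two_mul, _root_.map_add]
        rw [e2]; ring
      rw [e]
      exact add_nonneg' (sub_nonneg' h2t) (add_nonneg' hs0 (alg_nonneg ht.le))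
  obtain ⟨lam₀, hl0, hPl0⟩ := hbound
  set Lam : Set ℝ := {lam | 0 < lam ∧ P ≤ algebraMap ℝ R lam} with hLam
  have hnem : Lam.Nonempty := ⟨lam₀, hl0, hPl0⟩
  have hbdd : BddBelow Lam := ⟨0, fun x hx => hx.1.le⟩
  set c := sInf Lam with hcdef
  have hc0 : 0 ≤ c := le_csInf hnem (fun x hx => hx.1.le)
  have hub : ∀ ε : ℝ, 0 < ε → P ≤ algebraMap ℝ R (c + ε) := by
    intro ε hε
    obtain ⟨lam, hlam, hlt⟩ := (csInf_lt_iff hbdd hnem).mp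
      (show sInf Lam < c + ε by rw [← hcdef]; linarith)
    exact le_trans hlam.2 (alg_mono hlt.le)
  have hlb : ∀ ε : ℝ, 0 < ε → algebraMap ℝ R (c - ε) ≤ P := by
    intro ε hε
    rcases le_or_gt (c - ε) 0 with h | h
    · calc algebraMap ℝ R (c - ε) ≤ algebraMap ℝ R 0 := alg_mono h
        _ = 0 := _root_.map_zero _
        _ ≤ P := hP0
    · have hnot : (c - ε) ∉ Lam := by
        intro hmem
        have := csInf_le hbdd hmem
        rw [← hcdef] at this; linarith
      have hnle : ¬ P ≤ algebraMap ℝ R (c - ε) := fun hle => hnot ⟨h, hle⟩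
      exact (dichotomy hadd h0 hP hP0 h).resolve_left hnle
  rcases eq_or_lt_of_le hc0 with hceq | hcpos
  · -- c = 0 : P is infinitesimal, hence 0
    have hsmall : ∀ ε : ℝ, 0 < ε → P ≤ algebraMap ℝ R ε := by
      intro ε hε
      have := hub ε hε
      rwa [← hceq, zero_add] at this
    have hPzero : P = 0 := by
      apply RieszAlgebra.strictly_archimedean 1 P
      intro t
      have hunit : IsUnit ((1:R) - t • P) := by
        have e : (1:R) - t • P = algebraMap ℝ R 1 + (-(algebraMap ℝ R t * P)) := by
          rw [smul_as_mul, _root_.map_one]; ring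
        rw [e]
        exact unit_real_add hadd one_ne_zero (nonunit_neg (nonunit_mul _ hP))
      refine ⟨?_, hunit.ne_zero, hunit⟩
      rcases le_or_gt t 0 with ht | ht
      · have e : (1:R) - t • P = 1 + algebraMap ℝ R (-t) * P := by
          rw [smul_as_mul, _root_.map_neg]; ring
        rw [e]
        exact add_nonneg' one_nonneg (RieszAlgebra.mul_nonneg _ _ (alg_nonneg (by linarith)) hP0)
      · have h1 := hsmall (1/(2*t)) (by positivity)
        have h2 : algebraMap ℝ R t * P ≤ algebraMap ℝ R t * algebraMap ℝ R (1/(2*t)) :=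
          mul_le_mul_left' h1 (alg_nonneg ht.le)
        have h3 : algebraMap ℝ R t * algebraMap ℝ R (1/(2*t)) = algebraMap ℝ R (1/2) := by
          rw [← _root_.map_mul]; congr 1; field_simp
        have h4 : algebraMap ℝ R t * P ≤ 1 := by
          rw [h3] at h2
          exact le_trans h2 (by simpa using alg_mono (R := R) (show (1/2 : ℝ) ≤ 1 by norm_num))
        rw [smul_as_mul]
        exact sub_nonneg' h4
    exact eq_zero_of_sq_zero hadd h0 hm (hPdef ▸ hPzero)
  · -- c > 0 : contradiction
    exfalso
    have hlow2 : algebraMap ℝ R (c/2) ≤ P := by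
      have := hlb (c/2) (by linarith)
      rwa [show c - c/2 = c/2 by ring] at this
    obtain ⟨s, hs0, hsu⟩ := build_s hadd h0 hP (by linarith : (0:ℝ) < c/2) hlow2
    have hzero := RieszAlgebra.strictly_archimedean (1 + s) (P - algebraMap ℝ R c) ?_
    · have hPc : P = algebraMap ℝ R c := by linear_combination hzero
      exact hP (hPc ▸ alg_unit (ne_of_gt hcpos))
    intro t
    have hX : algebraMap ℝ R t * (P - algebraMap ℝ R c) ≤ algebraMap ℝ R (1/2) := by
      rcases lt_trichotomy t 0 with ht | ht | ht
      · have hmt : (0:ℝ) < 1/(2*(-t)) := by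
          have h' : 0 < -t := by linarith
          positivity
        have h1 := hlb (1/(2*(-t))) hmt
        have h2 : algebraMap ℝ R c - P ≤ algebraMap ℝ R (1/(2*(-t))) := by
          apply le_of_sub_nonneg
          have e : algebraMap ℝ R (1/(2*(-t))) - (algebraMap ℝ R c - P)
              = P - algebraMap ℝ R (c - 1/(2*(-t))) := by
            rw [_root_.map_sub]; ring
          rw [e]
          exact sub_nonneg' h1
        have h3 : algebraMap ℝ R (-t) * (algebraMap ℝ R c - P)
            ≤ algebraMap ℝ R (-t) * algebraMap ℝ R (1/(2*(-t))) :=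
          mul_le_mul_left' h2 (alg_nonneg (by linarith))
        have h4 : algebraMap ℝ R (-t) * algebraMap ℝ R (1/(2*(-t))) = algebraMap ℝ R (1/2) := by
          rw [← _root_.map_mul]; congr 1
          have ht' : t ≠ 0 := ne_of_lt ht
          field_simp
        have h5 : algebraMap ℝ R t * (P - algebraMap ℝ R c)
            = algebraMap ℝ R (-t) * (algebraMap ℝ R c - P) := by
          rw [_root_.map_neg]; ring
        rw [h5]; rw [h4] at h3; exact h3
      · rw [ht, _root_.map_zero, zero_mul]
        exact alg_nonneg (by norm_num)
      · have h1 := hub (1/(2*t)) (by positivity)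
        have h2 : P - algebraMap ℝ R c ≤ algebraMap ℝ R (1/(2*t)) := by
          apply le_of_sub_nonneg
          have e : algebraMap ℝ R (1/(2*t)) - (P - algebraMap ℝ R c)
              = algebraMap ℝ R (c + 1/(2*t)) - P := by
            rw [_root_.map_add]; ring
          rw [e]
          exact sub_nonneg' h1
        have h3 : algebraMap ℝ R t * (P - algebraMap ℝ R c)
            ≤ algebraMap ℝ R t * algebraMap ℝ R (1/(2*t)) :=
          mul_le_mul_left' h2 (alg_nonneg ht.le)
        have h4 : algebraMap ℝ R t * algebraMap ℝ R (1/(2*t)) = algebraMap ℝ R (1/2) := by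
          rw [← _root_.map_mul]; congr 1; field_simp
        rw [h4] at h3; exact h3
    have hbnd : 0 ≤ 1 + s - t • (P - algebraMap ℝ R c) := by
      have hhalf : algebraMap ℝ R (1/2) + algebraMap ℝ R (1/2) = (1:R) := by
        rw [← _root_.map_add]; norm_num
      have e : 1 + s - t • (P - algebraMap ℝ R c)
          = (algebraMap ℝ R (1/2) - algebraMap ℝ R t * (P - algebraMap ℝ R c))
            + (algebraMap ℝ R (1/2) + s) := by
        rw [smul_as_mul]
        linear_combination -hhalf
      rw [e]
      exact add_nonneg' (sub_nonneg' hX) (add_nonneg' (alg_nonneg (by norm_num)) hs0)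
    have hunit : IsUnit (1 + s - t • (P - algebraMap ℝ R c)) := by
      by_contra hn
      have h1 : ¬IsUnit ((1 + s - t • (P - algebraMap ℝ R c)) + algebraMap ℝ R t * P) :=
        hadd _ _ hn (nonunit_mul _ hP)
      have e : (1 + s - t • (P - algebraMap ℝ R c)) + algebraMap ℝ R t * P
          = algebraMap ℝ R (1 + t*c) + s := by
        rw [smul_as_mul, _root_.map_add, _root_.map_one, _root_.map_mul]
        ring
      rw [e] at h1
      exact h1 (hsu (1 + t*c))
    exact ⟨hbnd, hunit.ne_zero, hunit⟩

end withHyp2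

end RRAux


open RRAux Submodule

/-- Orthogonal decomposition: if `N = {x : b(x,x) ∉ R^×}` is a proper submodule of the
finitely generated module `M`, then `M = Rx₁ ⊥ ⋯ ⊥ Rx_k ⊥ N` with each `b(xᵢ,xᵢ)`
invertible. -/
theorem stmt7 {R : Type*} [RealRieszAlgebra R] {M : Type*} [AddCommGroup M] [Module R M]
    [Module.Finite R M]
    (b : M →ₗ[R] M →ₗ[R] R) (hsymm : ∀ x y : M, b x y = b y x)
    (N : Submodule R M) (hN : (N : Set M) = {x : M | ¬ IsUnit (b x x)})
    (hne : N ≠ ⊤) :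
    ∃ (k : ℕ) (x : Fin k → M),
      (∀ i, IsUnit (b (x i) (x i))) ∧
      (∀ i j, i ≠ j → b (x i) (x j) = 0) ∧
      (∀ i, ∀ m ∈ N, b (x i) m = 0) ∧
      (iSupIndep (fun o : Option (Fin k) =>
        Option.elim o N (fun i => Submodule.span R {x i}))) ∧
      ((⨆ o : Option (Fin k), Option.elim o N (fun i => Submodule.span R {x i})) = ⊤) := by
  classical
  have hmem : ∀ x : M, x ∈ N ↔ ¬IsUnit (b x x) := by
    intro x
    rw [← SetLike.mem_coe, hN]
    rfl
  obtain ⟨x₀, hx₀⟩ : ∃ x : M, x ∉ N := by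
    by_contra h
    push_neg at h
    exact hne (Submodule.eq_top_iff'.mpr h)
  have hu₀ : IsUnit (b x₀ x₀) := not_not.mp (fun h => hx₀ ((hmem x₀).mpr h))
  have h0 : ¬IsUnit (0:R) := by
    have := (hmem 0).mp (Submodule.zero_mem N)
    simpa using this
  haveI hnt : Nontrivial R := nontriv h0
  have hadd : ∀ a c : R, ¬IsUnit a → ¬IsUnit c → ¬IsUnit (a + c) := by
    intro a c ha hc
    have hin : ∀ r : R, ¬IsUnit r → r • x₀ ∈ N := by
      intro r hr
      rw [hmem]
      have e : b (r • x₀) (r • x₀) = r * (r * b x₀ x₀) := by simp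
      rw [e]
      intro hu
      exact hr (isUnit_of_mul_isUnit_left hu)
    have hsum := Submodule.add_mem N (hin a ha) (hin c hc)
    rw [← add_smul, hmem] at hsum
    intro hu
    apply hsum
    have e : b ((a+c) • x₀) ((a+c) • x₀) = (a+c) * ((a+c) * b x₀ x₀) := by simp
    rw [e]
    exact hu.mul (hu.mul hu₀)
  have unit_iff : ∀ a : R, IsUnit a ↔ a ≠ 0 := fun a =>
    ⟨IsUnit.ne_zero, fun h => by
      by_contra hn
      exact h (nonunit_eq_zero hadd h0 hn)⟩
  have hfield : IsField R :=
    ⟨exists_pair_ne R, mul_comm, fun {a} ha => ((unit_iff a).mpr ha).exists_right_inv⟩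
  letI : Field R := hfield.toField
  haveI : FiniteDimensional R M := ‹Module.Finite R M›
  obtain ⟨C, hC⟩ := Submodule.exists_isCompl N
  have h2ne : (2 : R) ≠ 0 := by
    have h2 : (algebraMap ℝ R) 2 = 2 := by
      rw [show (2:ℝ) = 1+1 by norm_num, _root_.map_add, _root_.map_one]; norm_num
    intro h
    have : (algebraMap ℝ R) 2 = (algebraMap ℝ R) 0 := by rw [h2, _root_.map_zero, h]
    have := (algebraMap ℝ R).injective this
    norm_num at this
  haveI : Invertible (2 : R) := invertibleOfNonzero h2ne
  set B := LinearMap.BilinForm.restrict b C with hB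
  have hBsymm : LinearMap.IsSymm B := by
    refine ⟨fun x y => ?_⟩
    simp only [hB, LinearMap.BilinForm.restrict_apply, RingHom.id_apply]
    exact hsymm _ _
  obtain ⟨v, hv⟩ := LinearMap.BilinForm.exists_orthogonal_basis hBsymm
  have hvC : ∀ i, ((v i : C) : M) ∈ C := fun i => (v i).2
  have hvne : ∀ i, ((v i : C) : M) ≠ 0 := by
    intro i h
    exact Module.Basis.ne_zero v i (by exact_mod_cast Submodule.coe_eq_zero.mp h)
  have hnotN : ∀ i, ((v i : C) : M) ∉ N := by
    intro i hin
    exact hvne i (Submodule.disjoint_def.mp hC.disjoint _ hin (hvC i))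
  have hunit : ∀ i, IsUnit (b (v i) (v i)) :=
    fun i => not_not.mp (fun h => hnotN i ((hmem _).mpr h))
  have borth : ∀ i j, i ≠ j → b ((v i : C) : M) ((v j : C) : M) = 0 := by
    intro i j hij
    have := hv hij
    simpa [hB, LinearMap.BilinForm.restrict_apply, Function.onFun] using this
  have orthN : ∀ x : M, x ∉ N → ∀ m ∈ N, b x m = 0 := by
    intro x hx n hn
    have hux : IsUnit (b x x) := not_not.mp (fun h => hx ((hmem x).mpr h))
    have hnn : b n n = 0 := by
      have := (hmem n).mp hn
      by_contra h'
      exact this ((unit_iff _).mpr h')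
    by_contra hc
    set u := b x x with hu
    set cc := b x n with hcc
    set r : R := -(u / (2 * cc)) with hr
    have hxin : x + r • n ∉ N := by
      intro hin
      apply hx
      have : (x + r • n) - r • n ∈ N := Submodule.sub_mem N hin (Submodule.smul_mem N r hn)
      simpa using this
    have hval : b (x + r • n) (x + r • n) = u + (2 * r) * cc + (r * r) * (b n n) := by
      simp only [_root_.map_add, _root_.map_smul, LinearMap.add_apply, LinearMap.smul_apply, smul_eq_mul]
      rw [hsymm n x]
      ring
    have hval0 : b (x + r • n) (x + r • n) = 0 := by
      rw [hval, hnn, hr]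
      field_simp
      ring
    have hu2 : IsUnit (b (x + r • n) (x + r • n)) :=
      not_not.mp (fun h => hxin ((hmem _).mpr h))
    rw [hval0] at hu2
    exact h0 hu2
  have hspan : (⨆ i, Submodule.span R {((v i : C) : M)}) = C := by
    calc (⨆ i, Submodule.span R {((v i : C) : M)})
        = ⨆ i, Submodule.map C.subtype (Submodule.span R {v i}) := by
          refine iSup_congr (fun i => ?_)
          rw [Submodule.map_span, Set.image_singleton]
          rfl
      _ = Submodule.map C.subtype (⨆ i, Submodule.span R {v i}) := (Submodule.map_iSup _ _).symm
      _ = Submodule.map C.subtype (Submodule.span R (Set.range v)) := by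
          rw [Submodule.span_range_eq_iSup]
      _ = Submodule.map C.subtype ⊤ := by rw [v.span_eq]
      _ = C := Submodule.map_subtype_top C
  refine ⟨Module.finrank R C, fun i => (v i : M), hunit, borth,
    fun i => orthN _ (hnotN i), ?_, ?_⟩
  · -- independence
    intro o
    match o with
    | none =>
      refine Disjoint.mono_right ?_ hC.disjoint
      refine iSup_le (fun j => iSup_le (fun hj => ?_))
      match j with
      | none => exact absurd rfl hj
      | some i =>
        simp only [Option.elim]
        rw [Submodule.span_le, Set.singleton_subset_iff]
        exact hvC i
    | some i =>
      have hle : (⨆ (j) (_ : j ≠ some i),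
          Option.elim j N (fun i => Submodule.span R {((v i : C) : M)}))
            ≤ LinearMap.ker (b ((v i : C) : M)) := by
        refine iSup_le (fun j => iSup_le (fun hj => ?_))
        match j with
        | none =>
          intro n hn
          rw [LinearMap.mem_ker]
          exact orthN _ (hnotN i) n hn
        | some j' =>
          have hji : j' ≠ i := fun h => hj (by rw [h])
          simp only [Option.elim]
          rw [Submodule.span_le, Set.singleton_subset_iff, SetLike.mem_coe, LinearMap.mem_ker]
          exact borth i j' (fun h => hji (by rw [h]))
      rw [Submodule.disjoint_def]
      intro y hy1 hy2
      obtain ⟨r, rfl⟩ := Submodule.mem_span_singleton.mp hy1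
      have := hle hy2
      rw [LinearMap.mem_ker, _root_.map_smul, smul_eq_mul] at this
      have hr0 : r = 0 := by
        rcases mul_eq_zero.mp this with h | h
        · exact h
        · exact absurd h (hunit i).ne_zero
      rw [hr0, zero_smul]
  · -- supremum
    rw [iSup_option]
    simp only [Option.elim]
    rw [hspan]
    exact hC.sup_eq_top
end

section
/- Conjugate gradient residual orthogonality: Under the CGM recursion over a commutative real Riesz algebra R with positive definite symmetric matrix A (feasible up to step k), the residuals satisfy r_iᵀ r_j = 0 for all i ≠ j with 0 ≤ i, j ≤ k, and the search directions are A-conjugate: p_iᵀ A p_j = 0 for i ≠ j, 0 ≤ i, j ≤ k. -/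
open Matrix

/-- CGM residual orthogonality and conjugacy: `rᵢᵀrⱼ = 0` and `pᵢᵀApⱼ = 0` for
`i ≠ j`, `0 ≤ i, j ≤ k`. -/
theorem stmt14 {R : Type*} [RealRieszAlgebra R] {n : ℕ}
    (A : Matrix (Fin n) (Fin n) R) (hsymm : Aᵀ = A)
    (hpd : ∀ v : Fin n → R, v ≠ 0 → SPos (v ⬝ᵥ A *ᵥ v))
    (b : Fin n → R) (x r p : ℕ → Fin n → R) (α : ℕ → R) (k : ℕ)
    (hp0 : p 0 = b - A *ᵥ x 0)
    (hunit : ∀ j ≤ k, IsUnit (p j ⬝ᵥ A *ᵥ p j))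
    (hx : ∀ j < k, x (j + 1) = x j + α j • p j)
    (hr : ∀ j ≤ k, r j = b - A *ᵥ x j)
    (hp : ∀ j < k, p (j + 1) = r (j + 1) -
      ((r (j + 1) ⬝ᵥ A *ᵥ p j) * Ring.inverse (p j ⬝ᵥ A *ᵥ p j)) • p j)
    (hα : ∀ j ≤ k, α j = (r j ⬝ᵥ p j) * Ring.inverse (p j ⬝ᵥ A *ᵥ p j)) :
    (∀ i j : ℕ, i ≠ j → i ≤ k → j ≤ k → r i ⬝ᵥ r j = 0) ∧
    (∀ i j : ℕ, i ≠ j → i ≤ k → j ≤ k → p i ⬝ᵥ A *ᵥ p j = 0) := by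
  rcases subsingleton_or_nontrivial R with hS | hN
  · exact ⟨fun _ _ _ _ _ => Subsingleton.elim _ _, fun _ _ _ _ _ => Subsingleton.elim _ _⟩
  rcases Nat.eq_zero_or_pos n with rfl | hn
  · constructor <;> intro i j _ _ _ <;> simp [dotProduct]
  haveI : IsOrderedAddMonoid R :=
    { add_le_add_left := fun a b h c => by
        rw [add_comm a c, add_comm b c]; exact RieszAlgebra.add_le_add_left a b h c }
  -- every nonzero element is a unit
  have hfield : ∀ c : R, c ≠ 0 → IsUnit c := by
    intro c hc
    set i0 : Fin n := ⟨0, hn⟩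
    have hv : (Pi.single i0 c : Fin n → R) ≠ 0 := by
      intro h
      apply hc
      have := congrFun h i0
      simpa using this
    obtain ⟨-, -, hu⟩ := hpd _ hv
    rw [single_dotProduct, Matrix.mulVec_single] at hu
    exact isUnit_of_mul_isUnit_left hu
  -- nonzero vectors have nonzero self-dot-product
  have hdot : ∀ v : Fin n → R, v ≠ 0 → v ⬝ᵥ v ≠ 0 := by
    intro v hv h0
    apply hv
    funext i
    by_contra hvi
    have hterm : ∀ j ∈ Finset.univ, (0:R) ≤ v j * v j := fun j _ => RieszAlgebra.sq_nonneg (v j)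
    have hle : v i * v i ≤ ∑ j, v j * v j := Finset.single_le_sum hterm (Finset.mem_univ i)
    have : v i * v i = 0 := le_antisymm (h0 ▸ hle) (RieszAlgebra.sq_nonneg (v i))
    exact ((hfield (v i) hvi).mul (hfield (v i) hvi)).ne_zero this
  -- symmetry of the bilinear form
  have hAs : ∀ v w : Fin n → R, v ⬝ᵥ A *ᵥ w = w ⬝ᵥ A *ᵥ v := by
    intro v w
    conv_lhs => rw [Matrix.dotProduct_mulVec, ← hsymm, Matrix.vecMul_transpose,
      dotProduct_comm]
  -- residual recursion
  have hrstep : ∀ j < k, r (j + 1) = r j - α j • (A *ᵥ p j) := by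
    intro j hj
    rw [hr _ (by omega), hr _ (by omega), hx j hj, Matrix.mulVec_add, Matrix.mulVec_smul]
    abel
  -- single-step conjugacy
  have hconj1 : ∀ j < k, p (j + 1) ⬝ᵥ A *ᵥ p j = 0 := by
    intro j hj
    rw [hp j hj, sub_dotProduct, smul_dotProduct, smul_eq_mul, mul_assoc,
      Ring.inverse_mul_cancel _ (hunit j (le_of_lt hj)), mul_one, sub_self]
  -- p j ≠ 0
  have hpne : ∀ j ≤ k, p j ≠ 0 := by
    intro j hj h0
    have := hunit j hj
    rw [h0] at this
    simp [isUnit_zero_iff] at this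
  -- r j ≠ 0
  have hr0p : r 0 = p 0 := (hr 0 (by omega)).trans hp0.symm
  have hrne : ∀ j ≤ k, r j ≠ 0 := by
    intro j hj
    cases j with
    | zero => rw [hr0p]; exact hpne 0 (by omega)
    | succ j' =>
      intro h0
      apply hpne (j' + 1) hj
      rw [hp j' (by omega), h0]
      simp
  -- main induction
  have main : ∀ m, m ≤ k →
      (∀ i j : ℕ, i < j → j ≤ m → r i ⬝ᵥ r j = 0) ∧
      (∀ i j : ℕ, i < j → j ≤ m → p i ⬝ᵥ A *ᵥ p j = 0) ∧
      (∀ i j : ℕ, i < j → j ≤ m → r j ⬝ᵥ p i = 0) := by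
    intro m
    induction m with
    | zero => exact fun _ => ⟨fun i j h1 h2 => by omega, fun i j h1 h2 => by omega,
        fun i j h1 h2 => by omega⟩
    | succ m ih =>
      intro hm1
      obtain ⟨ih1, ih2, ih3⟩ := ih (by omega)
      -- new orthogonality of r (m+1) to previous directions
      have new3 : ∀ i ≤ m, r (m + 1) ⬝ᵥ p i = 0 := by
        intro i hi
        rw [hrstep m (by omega), sub_dotProduct, smul_dotProduct, smul_eq_mul]
        have hcom : (A *ᵥ p m) ⬝ᵥ p i = p m ⬝ᵥ A *ᵥ p i := by
          rw [dotProduct_comm, hAs]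
        rcases eq_or_lt_of_le hi with rfl | hilt
        · rw [hcom, hα i (by omega), mul_assoc, Ring.inverse_mul_cancel _ (hunit i (by omega)),
            mul_one, sub_self]
        · rw [hcom, hAs, ih2 i m hilt le_rfl, ih3 i m hilt le_rfl, mul_zero, sub_zero]
      -- new orthogonality of residuals
      have new1 : ∀ i ≤ m, r i ⬝ᵥ r (m + 1) = 0 := by
        intro i hi
        rw [dotProduct_comm]
        cases i with
        | zero => rw [hr0p]; exact new3 0 (by omega)
        | succ i' =>
          have hre : r (i' + 1) = p (i' + 1) +
              ((r (i' + 1) ⬝ᵥ A *ᵥ p i') * Ring.inverse (p i' ⬝ᵥ A *ᵥ p i')) • p i' := by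
            rw [hp i' (by omega)]; abel
          rw [hre, dotProduct_add, dotProduct_smul, smul_eq_mul,
            new3 (i' + 1) hi, new3 i' (by omega), mul_zero, add_zero]
      -- new conjugacy
      have new2 : ∀ i ≤ m, p i ⬝ᵥ A *ᵥ p (m + 1) = 0 := by
        intro i hi
        rw [hAs]
        rcases eq_or_lt_of_le hi with rfl | hilt
        · exact hconj1 i (by omega)
        · rw [hp m (by omega), sub_dotProduct, smul_dotProduct, smul_eq_mul]
          have h2 : p m ⬝ᵥ A *ᵥ p i = 0 := by rw [hAs]; exact ih2 i m hilt le_rfl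
          rw [h2, mul_zero, sub_zero]
          -- show r (m+1) ⬝ᵥ A *ᵥ p i = 0 using invertibility of α i
          have hrp : r i ⬝ᵥ p i = r i ⬝ᵥ r i := by
            cases i with
            | zero => rw [hr0p]
            | succ i' =>
              rw [hp i' (by omega), dotProduct_sub, dotProduct_smul, smul_eq_mul]
              have : r (i' + 1) ⬝ᵥ p i' = 0 := ih3 i' (i' + 1) (by omega) (by omega)
              rw [this, mul_zero, sub_zero]
          have hαu : IsUnit (α i) := by
            rw [hα i (by omega), hrp]
            exact (hfield _ (hdot (r i) (hrne i (by omega)))).mul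
              (isUnit_ringInverse.mpr (hunit i (by omega)))
          have h1 : α i • (A *ᵥ p i) = r i - r (i + 1) := by
            rw [hrstep i (by omega)]; abel
          have hX : α i * (r (m + 1) ⬝ᵥ A *ᵥ p i) = 0 := by
            have : r (m + 1) ⬝ᵥ (α i • (A *ᵥ p i)) = r (m + 1) ⬝ᵥ (r i - r (i + 1)) := by
              rw [h1]
            rw [dotProduct_smul, smul_eq_mul] at this
            rw [this, dotProduct_sub, dotProduct_comm, new1 i (by omega),
              dotProduct_comm, new1 (i + 1) (by omega), sub_self]
          exact (hαu.mul_right_eq_zero).mp hX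
      refine ⟨fun i j hij hj => ?_, fun i j hij hj => ?_, fun i j hij hj => ?_⟩
      · by_cases hjm : j ≤ m
        · exact ih1 i j hij hjm
        · have : j = m + 1 := by omega
          subst this
          exact new1 i (by omega)
      · by_cases hjm : j ≤ m
        · exact ih2 i j hij hjm
        · have : j = m + 1 := by omega
          subst this
          exact new2 i (by omega)
      · by_cases hjm : j ≤ m
        · exact ih3 i j hij hjm
        · have : j = m + 1 := by omega
          subst this
          exact new3 i (by omega)
  obtain ⟨h1, h2, -⟩ := main k le_rfl
  refine ⟨fun i j hij hi hj => ?_, fun i j hij hi hj => ?_⟩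
  · rcases Nat.lt_or_ge i j with h | h
    · exact h1 i j h hj
    · rw [dotProduct_comm]
      exact h1 j i (by omega) hi
  · rcases Nat.lt_or_ge i j with h | h
    · exact h2 i j h hj
    · rw [hAs]
      exact h2 j i (by omega) hi
end

section
/- CGM optimality in the A-norm: Suppose CGM over a commutative real Riesz algebra R with positive definite symmetric matrix A is feasible up to step ℓ, producing iterates x₀,...,x_ℓ. Then for k < ℓ and every x ∈ x₀ + K(A, r₀, k-1), one has ‖x_ℓ - x‖_A² ≥ ‖x_ℓ - x_k‖_A² , i.e., x_k minimizes the A-distance to x_ℓ over the affine Krylov subspace x₀ + K(A, r₀, k-1). -/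
open Matrix

section riesz
variable {R : Type*} [RieszAlgebra R]

lemma riesz_sq_zero (u : R) (h : u * u = 0) : u = 0 := by
  by_cases h1 : (1 : R) = 0
  · calc u = u * 1 := (mul_one u).symm
    _ = u * 0 := by rw [h1]
    _ = 0 := mul_zero u
  · apply RieszAlgebra.strictly_archimedean 1 u
    intro t
    have hsq : ((t/2) • u) * ((t/2) • u) = 0 := by
      rw [smul_mul_smul_comm, h, smul_zero]
    have hu : (1 - t • u) * (1 + t • u) = 1 := by
      have h2 : (t • u) * (t • u) = 0 := by rw [smul_mul_smul_comm, h, smul_zero]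
      calc (1 - t • u) * (1 + t • u) = 1 - (t • u) * (t • u) := by ring
      _ = 1 := by rw [h2, sub_zero]
    refine ⟨?_, ?_, IsUnit.of_mul_eq_one _ hu⟩
    · have key : (1 - (t/2) • u) * (1 - (t/2) • u) = 1 - t • u := by
        calc (1 - (t/2) • u) * (1 - (t/2) • u)
            = 1 - ((t/2) • u + (t/2) • u) + ((t/2) • u) * ((t/2) • u) := by ring
        _ = 1 - t • u := by rw [hsq, add_zero, ← add_smul]; norm_num
      rw [← key]; exact RieszAlgebra.sq_nonneg _
    · intro hz
      rw [hz, zero_mul] at hu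
      exact h1 hu.symm

lemma riesz_pow_zero : ∀ (m : ℕ) (u : R), u ^ m = 0 → u = 0 := by
  intro m
  induction m using Nat.strong_induction_on with
  | _ m ih =>
    intro u h
    match m with
    | 0 =>
      have h1 : (1 : R) = 0 := by simpa using h
      calc u = u * 1 := (mul_one u).symm
      _ = u * 0 := by rw [h1]
      _ = 0 := mul_zero u
    | 1 => simpa using h
    | 2 => exact riesz_sq_zero u (by rw [← pow_two]; exact h)
    | (m+3) =>
      have h2 : (u ^ (m+2)) * (u ^ (m+2)) = 0 := by
        have he : u ^ (m+2) * u ^ (m+2) = u ^ (m+3) * u ^ (m+1) := by ring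
        rw [he, h, zero_mul]
      exact ih (m+2) (by omega) u (riesz_sq_zero _ h2)

lemma riesz_le_add_of_nonneg {a b : R} (hb : 0 ≤ b) : a ≤ a + b := by
  have := RieszAlgebra.add_le_add_left 0 b hb a
  rwa [add_zero] at this

lemma riesz_add_nonneg_zero {a b : R} (ha : 0 ≤ a) (hb : 0 ≤ b) (h : a + b = 0) : a = 0 := by
  have h2 : a ≤ a + b := riesz_le_add_of_nonneg hb
  rw [h] at h2
  exact le_antisymm h2 ha

lemma riesz_sum_sq {ι : Type*} (s : Finset ι) (f : ι → R) :
    (∑ i ∈ s, f i * f i) = 0 → ∀ i ∈ s, f i = 0 := by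
  induction s using Finset.cons_induction with
  | empty => simp
  | cons a s hnotmem ih =>
    intro h i hi
    rw [Finset.sum_cons] at h
    have hsum : 0 ≤ ∑ i ∈ s, f i * f i := by
      refine Finset.sum_induction _ _ (fun u v hu hv => ?_) le_rfl
        (fun i _ => RieszAlgebra.sq_nonneg (f i))
      calc (0:R) ≤ u := hu
      _ ≤ u + v := riesz_le_add_of_nonneg hv
    have h1 : f a * f a = 0 :=
      riesz_add_nonneg_zero (RieszAlgebra.sq_nonneg (f a)) hsum h
    rcases Finset.mem_cons.mp hi with rfl | hi'
    · exact riesz_sq_zero _ h1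
    · rw [h1, zero_add] at h
      exact ih h i hi'

end riesz

section cgm

variable {R : Type*} [RealRieszAlgebra R] {n : ℕ}

lemma dp_sum {ι : Type*} (v : Fin n → R) (s : Finset ι) (f : ι → Fin n → R) :
    v ⬝ᵥ (∑ i ∈ s, f i) = ∑ i ∈ s, v ⬝ᵥ f i := by
  induction s using Finset.cons_induction with
  | empty => simp
  | cons a s hnm ih => rw [Finset.sum_cons, Finset.sum_cons, dotProduct_add, ih]

lemma hsym2 (A : Matrix (Fin n) (Fin n) R) (hsymm : Aᵀ = A) :
    ∀ u v : Fin n → R, (A *ᵥ u) ⬝ᵥ v = u ⬝ᵥ (A *ᵥ v) := by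
  intro u v
  rw [dotProduct_comm, dotProduct_mulVec, ← mulVec_transpose, hsymm, dotProduct_comm]


variable (A : Matrix (Fin n) (Fin n) R) (b : Fin n → R) (x r p : ℕ → Fin n → R)
  (α : ℕ → R) (ℓ : ℕ)

lemma hr0 (hp0 : p 0 = b - A *ᵥ x 0) (hr : ∀ j ≤ ℓ, r j = b - A *ᵥ x j) :
    r 0 = p 0 := by rw [hr 0 (Nat.zero_le ℓ), hp0]

lemma hrec (hx : ∀ j < ℓ, x (j + 1) = x j + α j • p j)
    (hr : ∀ j ≤ ℓ, r j = b - A *ᵥ x j) :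
    ∀ j < ℓ, r (j+1) = r j - α j • (A *ᵥ p j) := by
  intro j hj
  rw [hr (j+1) (by omega), hr j (by omega), hx j hj, mulVec_add, mulVec_smul]
  abel

lemma hpr (hp : ∀ j < ℓ, p (j + 1) = r (j + 1) -
      ((r (j + 1) ⬝ᵥ A *ᵥ p j) * Ring.inverse (p j ⬝ᵥ A *ᵥ p j)) • p j) :
    ∀ j < ℓ, r (j + 1) = p (j + 1) +
    ((r (j + 1) ⬝ᵥ A *ᵥ p j) * Ring.inverse (p j ⬝ᵥ A *ᵥ p j)) • p j := by
  intro j hj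
  rw [hp j hj]
  abel

variable (hsymm : Aᵀ = A)
    (hp0 : p 0 = b - A *ᵥ x 0)
    (hunit : ∀ j ≤ ℓ, IsUnit (p j ⬝ᵥ A *ᵥ p j))
    (hx : ∀ j < ℓ, x (j + 1) = x j + α j • p j)
    (hr : ∀ j ≤ ℓ, r j = b - A *ᵥ x j)
    (hp : ∀ j < ℓ, p (j + 1) = r (j + 1) -
      ((r (j + 1) ⬝ᵥ A *ᵥ p j) * Ring.inverse (p j ⬝ᵥ A *ᵥ p j)) • p j)
    (hα : ∀ j ≤ ℓ, α j = (r j ⬝ᵥ p j) * Ring.inverse (p j ⬝ᵥ A *ᵥ p j))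

include hsymm hp0 hunit hx hr hp hα in
lemma pkg : ∀ j, j ≤ ℓ →
    (∀ i < j, r j ⬝ᵥ p i = 0) ∧
    (r j ⬝ᵥ p j = r j ⬝ᵥ r j) ∧
    (∀ i < j, (r i ⬝ᵥ r i) * (p j ⬝ᵥ A *ᵥ p i) = 0) ∧
    (∀ i ≤ j, ∃ t, r j ⬝ᵥ r j = (r i ⬝ᵥ r i) * t) := by
  have hR0 := hr0 A b x r p ℓ hp0 hr
  have hRec := hrec A b x r p α ℓ hx hr
  have hPr := hpr A r p ℓ hp
  have hSym := hsym2 A hsymm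
  intro j
  induction j using Nat.strong_induction_on with
  | _ j ih =>
    intro hjl
    match j with
    | 0 =>
      refine ⟨by omega, by rw [hR0], by omega, ?_⟩
      intro i hi
      interval_cases i
      exact ⟨1, (mul_one _).symm⟩
    | (jj+1) =>
      obtain ⟨aj, cj, bj, ej⟩ := ih jj (by omega) (by omega)
      have hjlt : jj < ℓ := by omega
      have hdu := hunit jj (by omega)
      have hαj : α jj = (r jj ⬝ᵥ r jj) * Ring.inverse (p jj ⬝ᵥ A *ᵥ p jj) := by
        rw [hα jj (by omega), cj]
      have hre : ∀ v, r (jj+1) ⬝ᵥ v = r jj ⬝ᵥ v - α jj * ((A *ᵥ p jj) ⬝ᵥ v) := by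
        intro v
        rw [hRec jj hjlt, sub_dotProduct, smul_dotProduct, smul_eq_mul]
      -- (a) at jj+1
      have anew : ∀ i < jj+1, r (jj+1) ⬝ᵥ p i = 0 := by
        intro i hi
        rcases Nat.lt_succ_iff_lt_or_eq.mp hi with hlt | rfl
        · obtain ⟨t, ht⟩ := ej i (le_of_lt hlt)
          rw [hre, aj i hlt, hSym, hαj, ht]
          have hcomm : (r i ⬝ᵥ r i) * t * Ring.inverse (p jj ⬝ᵥ A *ᵥ p jj) *
              (p jj ⬝ᵥ A *ᵥ p i) =
              (t * Ring.inverse (p jj ⬝ᵥ A *ᵥ p jj)) *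
              ((r i ⬝ᵥ r i) * (p jj ⬝ᵥ A *ᵥ p i)) := by ring
          rw [hcomm, bj i hlt, mul_zero, sub_zero]
        · rw [hre, cj, hSym, hαj, mul_assoc,
            Ring.inverse_mul_cancel _ hdu, mul_one, sub_self]
      -- r (jj+1) ⊥ r m for m ≤ jj
      have rrnew : ∀ m ≤ jj, r (jj+1) ⬝ᵥ r m = 0 := by
        intro m hm
        match m with
        | 0 =>
          rw [hR0]
          exact anew 0 (by omega)
        | (mm+1) =>
          rw [hPr mm (by omega), dotProduct_add, dotProduct_smul, smul_eq_mul,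
            anew (mm+1) (by omega), anew mm (by omega), mul_zero, add_zero]
      -- (c) at jj+1
      have cnew : r (jj+1) ⬝ᵥ p (jj+1) = r (jj+1) ⬝ᵥ r (jj+1) := by
        rw [hp jj hjlt, dotProduct_sub, dotProduct_smul, smul_eq_mul,
          anew jj (by omega), mul_zero, sub_zero]
      -- (e) at jj+1
      have estep : ∃ t, r (jj+1) ⬝ᵥ r (jj+1) = (r jj ⬝ᵥ r jj) * t := by
        refine ⟨1 - Ring.inverse (p jj ⬝ᵥ A *ᵥ p jj) * ((A *ᵥ p jj) ⬝ᵥ r jj)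
          - Ring.inverse (p jj ⬝ᵥ A *ᵥ p jj) * (r jj ⬝ᵥ (A *ᵥ p jj))
          + (r jj ⬝ᵥ r jj) * (Ring.inverse (p jj ⬝ᵥ A *ᵥ p jj) *
            Ring.inverse (p jj ⬝ᵥ A *ᵥ p jj)) * ((A *ᵥ p jj) ⬝ᵥ (A *ᵥ p jj)), ?_⟩
        rw [hRec jj hjlt, hαj]
        simp only [sub_dotProduct, dotProduct_sub, smul_dotProduct, dotProduct_smul,
          smul_eq_mul]
        ring
      have enew : ∀ i ≤ jj+1, ∃ t, r (jj+1) ⬝ᵥ r (jj+1) = (r i ⬝ᵥ r i) * t := by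
        intro i hi
        rcases Nat.lt_succ_iff_lt_or_eq.mp (Nat.lt_succ_of_le hi) with hlt | rfl
        · obtain ⟨t0, ht0⟩ := estep
          obtain ⟨t1, ht1⟩ := ej i (by omega)
          exact ⟨t1 * t0, by rw [ht0, ht1, mul_assoc]⟩
        · exact ⟨1, (mul_one _).symm⟩
      -- (b) at jj+1
      have bnew : ∀ i < jj+1, (r i ⬝ᵥ r i) * (p (jj+1) ⬝ᵥ A *ᵥ p i) = 0 := by
        intro i hi
        have hps : ∀ v, p (jj+1) ⬝ᵥ v = r (jj+1) ⬝ᵥ v -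
            ((r (jj + 1) ⬝ᵥ A *ᵥ p jj) * Ring.inverse (p jj ⬝ᵥ A *ᵥ p jj)) *
              (p jj ⬝ᵥ v) := by
          intro v
          rw [hp jj hjlt, sub_dotProduct, smul_dotProduct, smul_eq_mul]
        have hz : p (jj+1) ⬝ᵥ A *ᵥ p jj = 0 := by
          rw [hps, mul_assoc, Ring.inverse_mul_cancel _ hdu, mul_one, sub_self]
        rcases Nat.lt_succ_iff_lt_or_eq.mp hi with hlt | rfl
        · obtain ⟨_, ci, _, _⟩ := ih i (by omega) (by omega)
          have hdui := hunit i (by omega)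
          have hαi : α i = (r i ⬝ᵥ r i) * Ring.inverse (p i ⬝ᵥ A *ᵥ p i) := by
            rw [hα i (by omega), ci]
          have hsmul : α i • (A *ᵥ p i) = r i - r (i+1) := by
            rw [hRec i (by omega), sub_sub_cancel]
          have key : α i * (r (jj+1) ⬝ᵥ (A *ᵥ p i)) = 0 := by
            rw [← smul_eq_mul, ← dotProduct_smul, hsmul, dotProduct_sub,
              rrnew i (by omega), rrnew (i+1) (by omega), sub_self]
          have key2 : (r i ⬝ᵥ r i) * (r (jj+1) ⬝ᵥ (A *ᵥ p i)) = 0 := by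
            have hconv : (r i ⬝ᵥ r i) * (r (jj+1) ⬝ᵥ (A *ᵥ p i)) =
                (p i ⬝ᵥ A *ᵥ p i) * (α i * (r (jj+1) ⬝ᵥ (A *ᵥ p i))) := by
              rw [hαi, ← mul_assoc, ← mul_assoc,
                mul_comm (p i ⬝ᵥ A *ᵥ p i) (r i ⬝ᵥ r i), mul_assoc (r i ⬝ᵥ r i),
                mul_comm (p i ⬝ᵥ A *ᵥ p i) (Ring.inverse (p i ⬝ᵥ A *ᵥ p i)),
                Ring.inverse_mul_cancel _ hdui, mul_one]
            rw [hconv, key, mul_zero]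
          rw [hps]
          have expand : (r i ⬝ᵥ r i) * (r (jj + 1) ⬝ᵥ A *ᵥ p i -
              (r (jj + 1) ⬝ᵥ A *ᵥ p jj) * Ring.inverse (p jj ⬝ᵥ A *ᵥ p jj) *
                (p jj ⬝ᵥ A *ᵥ p i)) =
              (r i ⬝ᵥ r i) * (r (jj + 1) ⬝ᵥ A *ᵥ p i) -
              ((r (jj + 1) ⬝ᵥ A *ᵥ p jj) * Ring.inverse (p jj ⬝ᵥ A *ᵥ p jj)) *
                ((r i ⬝ᵥ r i) * (p jj ⬝ᵥ A *ᵥ p i)) := by ring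
          rw [expand, key2, bj i hlt, mul_zero, sub_zero]
        · rw [hz, mul_zero]
      exact ⟨anew, cnew, bnew, enew⟩

include hsymm hp0 hunit hx hr hp hα in
lemma krylov_rep : ∀ m, m < ℓ → ((r m ⬝ᵥ r m) ^ (m+1)) • ((A ^ m) *ᵥ r 0) ∈
    Submodule.span R {v | ∃ i, i ≤ m ∧ ∃ t : R, v = ((r i ⬝ᵥ r i) * t) • p i} := by
  have hR0 := hr0 A b x r p ℓ hp0 hr
  have hRec := hrec A b x r p α ℓ hx hr
  have hPr := hpr A r p ℓ hp
  have hPkg := pkg A b x r p α ℓ hsymm hp0 hunit hx hr hp hα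
  intro m
  induction m with
  | zero =>
    intro _
    apply Submodule.subset_span
    exact ⟨0, le_rfl, 1, by rw [pow_one, pow_zero, one_mulVec, hR0, mul_one]⟩
  | succ m ihm =>
    intro hml
    have hm : m < ℓ := by omega
    have IH := ihm hm
    obtain ⟨_, _, _, e1⟩ := hPkg (m+1) (by omega)
    obtain ⟨t, ht⟩ := e1 m (by omega)
    have key0 : ((r (m+1) ⬝ᵥ r (m+1)) ^ (m+1+1)) • ((A ^ (m+1)) *ᵥ r 0) =
        ((r (m+1) ⬝ᵥ r (m+1)) * t ^ (m+1)) •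
          (A *ᵥ (((r m ⬝ᵥ r m) ^ (m+1)) • ((A ^ m) *ᵥ r 0))) := by
      rw [mulVec_smul, smul_smul, pow_succ' A m, ← mulVec_mulVec]
      congr 1
      rw [ht]; ring
    rw [key0]
    -- generic stability of span under (s_{m+1} * e) • (A *ᵥ ·)
    have hrspan : ∀ q ≤ m+1, ∀ g : R, ((r (m+1) ⬝ᵥ r (m+1)) * g) • r q ∈
        Submodule.span R {v | ∃ i, i ≤ m+1 ∧ ∃ t : R, v = ((r i ⬝ᵥ r i) * t) • p i} := by
      intro q hq g
      obtain ⟨u, hu⟩ := e1 q hq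
      match q with
      | 0 =>
        apply Submodule.subset_span
        refine ⟨0, by omega, u * g, ?_⟩
        rw [hu, mul_assoc]
        exact congrArg (fun z => ((r 0 ⬝ᵥ r 0) * (u * g)) • z) hR0
      | (q'+1) =>
        obtain ⟨u', hu'⟩ := e1 q' (by omega)
        rw [hPr q' (by omega), smul_add, smul_smul]
        refine Submodule.add_mem _ (Submodule.subset_span ⟨q'+1, by omega, u * g, by
          rw [hu, mul_assoc]⟩) (Submodule.subset_span ⟨q', by omega,
          u' * (g * (r (q' + 1) ⬝ᵥ A *ᵥ p q' * Ring.inverse (p q' ⬝ᵥ A *ᵥ p q'))), ?_⟩)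
        rw [hu', ← mul_assoc, ← mul_assoc]
        ring_nf
    have main : ∀ w ∈ Submodule.span R
        {v | ∃ i, i ≤ m ∧ ∃ t : R, v = ((r i ⬝ᵥ r i) * t) • p i},
        ((r (m+1) ⬝ᵥ r (m+1)) * t ^ (m+1)) • (A *ᵥ w) ∈
        Submodule.span R {v | ∃ i, i ≤ m+1 ∧ ∃ t : R, v = ((r i ⬝ᵥ r i) * t) • p i} := by
      intro w hw
      induction hw using Submodule.span_induction with
      | mem v hv =>
        obtain ⟨i, him, c, rfl⟩ := hv
        obtain ⟨_, ci, _, _⟩ := hPkg i (by omega)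
        have hdui := hunit i (by omega)
        have hαi : α i = (r i ⬝ᵥ r i) * Ring.inverse (p i ⬝ᵥ A *ᵥ p i) := by
          rw [hα i (by omega), ci]
        have hsmul : α i • (A *ᵥ p i) = r i - r (i+1) := by
          rw [hRec i (by omega), sub_sub_cancel]
        have hdinv : (p i ⬝ᵥ A *ᵥ p i) * Ring.inverse (p i ⬝ᵥ A *ᵥ p i) = 1 :=
          Ring.mul_inverse_cancel _ hdui
        have hsc : (p i ⬝ᵥ A *ᵥ p i) * α i = r i ⬝ᵥ r i := by
          rw [hαi, ← mul_assoc, mul_comm (p i ⬝ᵥ A *ᵥ p i) (r i ⬝ᵥ r i), mul_assoc,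
            hdinv, mul_one]
        have key1 : (r i ⬝ᵥ r i) • (A *ᵥ p i) =
            (p i ⬝ᵥ A *ᵥ p i) • (r i - r (i+1)) := by
          rw [← hsc, mul_smul, hsmul]
        have hstep : A *ᵥ (((r i ⬝ᵥ r i) * c) • p i) =
            c • ((p i ⬝ᵥ A *ᵥ p i) • (r i - r (i+1))) := by
          rw [mulVec_smul, mul_comm, mul_smul, key1]
        rw [hstep, smul_smul, smul_smul, smul_sub, mul_assoc, mul_assoc]
        exact Submodule.sub_mem _ (hrspan i (by omega) _) (hrspan (i+1) (by omega) _)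
      | zero => rw [mulVec_zero, smul_zero]; exact Submodule.zero_mem _
      | add u v hu hv ihu ihv =>
        rw [mulVec_add, smul_add]
        exact Submodule.add_mem _ ihu ihv
      | smul a u hu ihu =>
        rw [mulVec_smul, smul_comm]
        exact Submodule.smul_mem _ a ihu
    exact main _ IH

lemma killr (i : ℕ) (c : R) (h : c * (r i ⬝ᵥ r i) = 0) : ∀ q, c * r i q = 0 := by
  intro q
  have hdp : r i ⬝ᵥ r i = ∑ q' : Fin n, r i q' * r i q' := rfl
  have hsum : ∑ q' : Fin n, (c * r i q') * (c * r i q') = 0 := by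
    have he : ∑ q' : Fin n, (c * r i q') * (c * r i q') = c * (c * (r i ⬝ᵥ r i)) := by
      rw [hdp, Finset.mul_sum, Finset.mul_sum]
      exact Finset.sum_congr rfl fun q' _ => by ring
    rw [he, h, mul_zero]
  exact riesz_sum_sq Finset.univ _ hsum q (Finset.mem_univ q)

include hsymm hp0 hunit hx hr hp hα in
lemma upg (i j : ℕ) (hij : i ≤ j) (hjl : j ≤ ℓ) (c : R)
    (h : c * (r i ⬝ᵥ r i) = 0) : ∀ v : Fin n → R, c * (r j ⬝ᵥ v) = 0 := by
  obtain ⟨_, _, _, ej⟩ := pkg A b x r p α ℓ hsymm hp0 hunit hx hr hp hα j hjl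
  obtain ⟨t, ht⟩ := ej i hij
  have h2 : c * (r j ⬝ᵥ r j) = 0 := by rw [ht, ← mul_assoc, h, zero_mul]
  have h3 := killr r j c h2
  intro v
  have he : c * (r j ⬝ᵥ v) = ∑ q : Fin n, (c * r j q) * v q := by
    have hdp : r j ⬝ᵥ v = ∑ q : Fin n, r j q * v q := rfl
    rw [hdp, Finset.mul_sum]
    exact Finset.sum_congr rfl fun q _ => by ring
  rw [he]
  exact Finset.sum_eq_zero fun q _ => by rw [h3 q, zero_mul]

include hsymm hp0 hunit hx hr hp hα in
lemma ylem : ∀ m j, m < j → j ≤ ℓ → r j ⬝ᵥ ((A ^ m) *ᵥ r 0) = 0 := by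
  intro m j hmj hjl
  have hm : m < ℓ := by omega
  have hrep := krylov_rep A b x r p α ℓ hsymm hp0 hunit hx hr hp hα m hm
  have aj := (pkg A b x r p α ℓ hsymm hp0 hunit hx hr hp hα j hjl).1
  -- Step 1 : weighted orthogonality
  have h1 : (r m ⬝ᵥ r m) ^ (m+1) * (r j ⬝ᵥ ((A ^ m) *ᵥ r 0)) = 0 := by
    have he : (r m ⬝ᵥ r m) ^ (m+1) * (r j ⬝ᵥ ((A ^ m) *ᵥ r 0)) =
        r j ⬝ᵥ (((r m ⬝ᵥ r m) ^ (m+1)) • ((A ^ m) *ᵥ r 0)) := by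
      rw [dotProduct_smul, smul_eq_mul]
    rw [he]
    have hgen : ∀ w ∈ Submodule.span R
        {v | ∃ i, i ≤ m ∧ ∃ t : R, v = ((r i ⬝ᵥ r i) * t) • p i}, r j ⬝ᵥ w = 0 := by
      intro w hw
      induction hw using Submodule.span_induction with
      | mem v hv =>
        obtain ⟨i, him, t, rfl⟩ := hv
        rw [dotProduct_smul, smul_eq_mul, aj i (by omega), mul_zero]
      | zero => simp
      | add u v hu hv ihu ihv => rw [dotProduct_add, ihu, ihv, add_zero]
      | smul a u hu ihu => rw [dotProduct_smul, smul_eq_mul, ihu, mul_zero]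
    exact hgen _ hrep
  -- Step 2 : peel off the weights
  have peel : ∀ N e, (r m ⬝ᵥ r m) ^ N * (r j ⬝ᵥ ((A ^ m) *ᵥ r 0)) ^ e = 0 →
      (r j ⬝ᵥ ((A ^ m) *ᵥ r 0)) ^ (N + e) = 0 := by
    intro N
    induction N with
    | zero => intro e h; simpa using h
    | succ N ihN =>
      intro e h
      have h' : ((r m ⬝ᵥ r m) ^ N * (r j ⬝ᵥ ((A ^ m) *ᵥ r 0)) ^ e) *
          (r m ⬝ᵥ r m) = 0 := by
        have he2 : ((r m ⬝ᵥ r m) ^ N * (r j ⬝ᵥ ((A ^ m) *ᵥ r 0)) ^ e) *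
            (r m ⬝ᵥ r m) =
            (r m ⬝ᵥ r m) ^ (N+1) * (r j ⬝ᵥ ((A ^ m) *ᵥ r 0)) ^ e := by ring
        rw [he2, h]
      have h2 := upg A b x r p α ℓ hsymm hp0 hunit hx hr hp hα m j
        (le_of_lt hmj) hjl _ h' ((A ^ m) *ᵥ r 0)
      have h3 : (r m ⬝ᵥ r m) ^ N * (r j ⬝ᵥ ((A ^ m) *ᵥ r 0)) ^ (e+1) = 0 := by
        have he3 : (r m ⬝ᵥ r m) ^ N * (r j ⬝ᵥ ((A ^ m) *ᵥ r 0)) ^ (e+1) =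
            ((r m ⬝ᵥ r m) ^ N * (r j ⬝ᵥ ((A ^ m) *ᵥ r 0)) ^ e) *
            (r j ⬝ᵥ ((A ^ m) *ᵥ r 0)) := by ring
        rw [he3, h2]
      have h4 := ihN (e+1) h3
      rwa [show N + (e+1) = N + 1 + e by omega] at h4
  have h5 : (r j ⬝ᵥ ((A ^ m) *ᵥ r 0)) ^ (m + 1 + 1) = 0 :=
    peel (m+1) 1 (by rw [pow_one]; exact h1)
  exact riesz_pow_zero _ _ h5

lemma xdiff (hx : ∀ j < ℓ, x (j + 1) = x j + α j • p j) :
    ∀ k ≤ ℓ, x k - x 0 = ∑ i ∈ Finset.range k, α i • p i := by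
  intro k
  induction k with
  | zero => intro _; simp
  | succ k ihk =>
    intro hk
    rw [hx k (by omega), Finset.sum_range_succ, ← ihk (by omega)]
    abel

end cgm

/-- CGM optimality: if CGM is feasible up to step `ℓ` and `1 ≤ k < ℓ`, then `x_k`
minimizes the `A`-distance to `x_ℓ` over the affine Krylov space
`x₀ + K(A, r₀, k-1)` : `‖x_ℓ - x_k‖_A² ≤ ‖x_ℓ - x‖_A²` for all such `x`. -/
theorem stmt16 {R : Type*} [RealRieszAlgebra R] {n : ℕ}
    (A : Matrix (Fin n) (Fin n) R) (hsymm : Aᵀ = A)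
    (hpd : ∀ v : Fin n → R, v ≠ 0 → SPos (v ⬝ᵥ A *ᵥ v))
    (b : Fin n → R) (x r p : ℕ → Fin n → R) (α : ℕ → R) (ℓ : ℕ)
    (hp0 : p 0 = b - A *ᵥ x 0)
    (hunit : ∀ j ≤ ℓ, IsUnit (p j ⬝ᵥ A *ᵥ p j))
    (hx : ∀ j < ℓ, x (j + 1) = x j + α j • p j)
    (hr : ∀ j ≤ ℓ, r j = b - A *ᵥ x j)
    (hp : ∀ j < ℓ, p (j + 1) = r (j + 1) -
      ((r (j + 1) ⬝ᵥ A *ᵥ p j) * Ring.inverse (p j ⬝ᵥ A *ᵥ p j)) • p j)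
    (hα : ∀ j ≤ ℓ, α j = (r j ⬝ᵥ p j) * Ring.inverse (p j ⬝ᵥ A *ᵥ p j)) :
    ∀ k : ℕ, 1 ≤ k → k < ℓ →
    ∀ y : Fin n → R, (y - x 0) ∈ Submodule.span R {v | ∃ i ≤ k - 1, v = (A ^ i) *ᵥ r 0} →
      (x ℓ - x k) ⬝ᵥ A *ᵥ (x ℓ - x k) ≤ (x ℓ - y) ⬝ᵥ A *ᵥ (x ℓ - y) := by
  intro k hk1 hkl y hy
  have hsym := hsym2 A hsymm
  have aK := (pkg A b x r p α ℓ hsymm hp0 hunit hx hr hp hα k (le_of_lt hkl)).1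
  have aL := (pkg A b x r p α ℓ hsymm hp0 hunit hx hr hp hα ℓ le_rfl).1
  have hAg : A *ᵥ (x ℓ - x k) = r k - r ℓ := by
    rw [mulVec_sub, hr k (le_of_lt hkl), hr ℓ le_rfl]
    abel
  have hcross : (x ℓ - x k) ⬝ᵥ (A *ᵥ (x k - y)) = 0 := by
    rw [← hsym (x ℓ - x k) (x k - y), hAg]
    have hky : x k - y = (x k - x 0) - (y - x 0) := by abel
    rw [hky, dotProduct_sub]
    have h1 : (r k - r ℓ) ⬝ᵥ (x k - x 0) = 0 := by
      rw [xdiff x p α ℓ hx k (le_of_lt hkl), dp_sum]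
      refine Finset.sum_eq_zero fun i hi => ?_
      have hik : i < k := Finset.mem_range.mp hi
      rw [dotProduct_smul, smul_eq_mul, sub_dotProduct, aK i hik, aL i (by omega),
        sub_self, mul_zero]
    have h2 : (r k - r ℓ) ⬝ᵥ (y - x 0) = 0 := by
      have hgen : ∀ w ∈ Submodule.span R {v | ∃ i ≤ k - 1, v = (A ^ i) *ᵥ r 0},
          (r k - r ℓ) ⬝ᵥ w = 0 := by
        intro w hw
        induction hw using Submodule.span_induction with
        | mem v hv =>
          obtain ⟨i, hik, rfl⟩ := hv
          rw [sub_dotProduct,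
            ylem A b x r p α ℓ hsymm hp0 hunit hx hr hp hα i k (by omega)
              (le_of_lt hkl),
            ylem A b x r p α ℓ hsymm hp0 hunit hx hr hp hα i ℓ (by omega) le_rfl,
            sub_self]
        | zero => simp
        | add u v hu hv ihu ihv => rw [dotProduct_add, ihu, ihv, add_zero]
        | smul a u hu ihu => rw [dotProduct_smul, smul_eq_mul, ihu, mul_zero]
      exact hgen _ hy
    rw [h1, h2, sub_zero]
  have hcross2 : (x k - y) ⬝ᵥ (A *ᵥ (x ℓ - x k)) = 0 := by
    rw [← hsym (x k - y) (x ℓ - x k), dotProduct_comm]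
    exact hcross
  have hdecomp : (x ℓ - y) ⬝ᵥ A *ᵥ (x ℓ - y) =
      (x ℓ - x k) ⬝ᵥ A *ᵥ (x ℓ - x k) + (x k - y) ⬝ᵥ A *ᵥ (x k - y) := by
    have hsplit : x ℓ - y = (x ℓ - x k) + (x k - y) := by abel
    rw [hsplit, mulVec_add, dotProduct_add, add_dotProduct, add_dotProduct,
      hcross, hcross2]
    ring
  have hpos : 0 ≤ (x k - y) ⬝ᵥ A *ᵥ (x k - y) := by
    by_cases hz : x k - y = 0
    · rw [hz]; simp
    · exact (hpd _ hz).1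
  rw [hdecomp]
  exact riesz_le_add_of_nonneg hpos
end

section
/- The CGM over a commutative real Riesz algebra terminates within n steps: if CGM for the n×n system Ax = b is feasible at every step and no residual r_k with k ≤ n vanishes, a contradiction arises, since the residuals r₀, ..., r_n would be n+1 pairwise orthogonal nonzero (hence linearly independent) vectors in the rank-n free module Rⁿ. -/
open Matrix

/-- CGM terminates within `n` steps: if the recursion is feasible at every step up to
`n`, each residual `r₀,…,r_n` is nonzero, and `rᵢᵀrᵢ` is invertible for each of them,
a contradiction arises (n+1 pairwise orthogonal such vectors cannot exist in `Rⁿ`). -/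
theorem stmt17 {R : Type*} [RealRieszAlgebra R] {n : ℕ}
    (A : Matrix (Fin n) (Fin n) R) (hsymm : Aᵀ = A)
    (hpd : ∀ v : Fin n → R, v ≠ 0 → SPos (v ⬝ᵥ A *ᵥ v))
    (b : Fin n → R) (x r p : ℕ → Fin n → R) (α : ℕ → R)
    (hp0 : p 0 = b - A *ᵥ x 0)
    (hunit : ∀ j ≤ n, IsUnit (p j ⬝ᵥ A *ᵥ p j))
    (hx : ∀ j < n, x (j + 1) = x j + α j • p j)
    (hr : ∀ j ≤ n, r j = b - A *ᵥ x j)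
    (hp : ∀ j < n, p (j + 1) = r (j + 1) -
      ((r (j + 1) ⬝ᵥ A *ᵥ p j) * Ring.inverse (p j ⬝ᵥ A *ᵥ p j)) • p j)
    (hα : ∀ j ≤ n, α j = (r j ⬝ᵥ p j) * Ring.inverse (p j ⬝ᵥ A *ᵥ p j)) :
    ∀ hnz : ∀ i ≤ n, r i ≠ 0, ∀ hrr : ∀ i ≤ n, IsUnit (r i ⬝ᵥ r i),
    False := by
  intro hnz hrr
  -- symmetry of the bilinear form
  have hsym : ∀ u v : Fin n → R, u ⬝ᵥ A *ᵥ v = v ⬝ᵥ A *ᵥ u := by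
    intro u v
    rw [Matrix.dotProduct_mulVec, ← Matrix.mulVec_transpose, hsymm, dotProduct_comm]
  have hsym' : ∀ u v : Fin n → R, (A *ᵥ u) ⬝ᵥ v = v ⬝ᵥ A *ᵥ u := by
    intro u v; rw [dotProduct_comm]
  -- r 0 = p 0
  have hr0 : r 0 = p 0 := by rw [hr 0 (Nat.zero_le n), hp0]
  -- residual recursion
  have rrec : ∀ j < n, r (j + 1) = r j - α j • (A *ᵥ p j) := by
    intro j hj
    rw [hr (j + 1) (by omega), hx j hj, Matrix.mulVec_add, Matrix.mulVec_smul,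
      hr j (le_of_lt hj)]
    abel
  -- r i ⬝ᵥ p i = r i ⬝ᵥ r i, given orthogonality to previous directions
  have rpeq : ∀ i ≤ n, (∀ t < i, r i ⬝ᵥ p t = 0) → r i ⬝ᵥ p i = r i ⬝ᵥ r i := by
    intro i hin hortho
    match i with
    | 0 => rw [hr0]
    | j + 1 =>
      rw [hp j (by omega), dotProduct_sub, dotProduct_smul, smul_eq_mul,
        hortho j (by omega), mul_zero, sub_zero]
  -- main invariants of CG by strong induction
  have key : ∀ k, k ≤ n → (∀ i < k, r k ⬝ᵥ p i = 0) ∧ (∀ i < k, r k ⬝ᵥ r i = 0) ∧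
      (∀ i < k, p k ⬝ᵥ A *ᵥ p i = 0) := by
    intro k
    induction k using Nat.strong_induction_on with
    | _ k ih =>
      intro hk
      match k with
      | 0 => exact ⟨fun i hi => absurd hi (Nat.not_lt_zero i),
          fun i hi => absurd hi (Nat.not_lt_zero i),
          fun i hi => absurd hi (Nat.not_lt_zero i)⟩
      | m + 1 =>
        have hmn : m < n := by omega
        obtain ⟨P1, P2, P3⟩ := ih m (by omega) (by omega)
        -- orthogonality of the new residual to all previous directions
        have Sc : ∀ i < m + 1, r (m + 1) ⬝ᵥ p i = 0 := by
          intro i hi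
          rw [rrec m hmn, sub_dotProduct, smul_dotProduct, smul_eq_mul, hsym']
          rcases Nat.lt_or_ge i m with him | him
          · rw [P1 i him, hsym, P3 i him, mul_zero, sub_zero]
          · have : i = m := by omega
            subst this
            rw [hα i (by omega), mul_assoc,
              Ring.inverse_mul_cancel _ (hunit i (by omega)), mul_one, sub_self]
        -- orthogonality of the new residual to all previous residuals
        have Fc : ∀ i < m + 1, r (m + 1) ⬝ᵥ r i = 0 := by
          intro i hi
          match i with
          | 0 => rw [hr0]; exact Sc 0 (by omega)
          | j + 1 =>
            have hjn : j < n := by omega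
            have hrp : r (j + 1) = p (j + 1) +
                ((r (j + 1) ⬝ᵥ A *ᵥ p j) * Ring.inverse (p j ⬝ᵥ A *ᵥ p j)) • p j := by
              rw [hp j hjn]; abel
            rw [hrp, dotProduct_add, dotProduct_smul, smul_eq_mul,
              Sc (j + 1) hi, Sc j (by omega), mul_zero, add_zero]
        refine ⟨Sc, Fc, ?_⟩
        -- A-orthogonality of the new direction to all previous directions
        intro i hi
        rw [hp m hmn, sub_dotProduct, smul_dotProduct, smul_eq_mul]
        rcases Nat.lt_or_ge i m with him | him
        · rw [P3 i him, mul_zero, sub_zero]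
          -- r (m+1) ⬝ᵥ A p i = 0 since α i • A p i = r i - r (i+1) and α i is a unit
          have hin : i < n := by omega
          have hαunit : IsUnit (α i) := by
            rw [hα i (by omega), rpeq i (by omega) (ih i (by omega) (by omega)).1]
            exact (hrr i (by omega)).mul (isUnit_ringInverse.mpr (hunit i (by omega)))
          have hz : α i * (r (m + 1) ⬝ᵥ A *ᵥ p i) = 0 := by
            have : r (m + 1) ⬝ᵥ (α i • (A *ᵥ p i)) = 0 := by
              have hsub : α i • (A *ᵥ p i) = r i - r (i + 1) := by
                rw [rrec i hin]; abel
              rw [hsub, dotProduct_sub, Fc i (by omega), Fc (i + 1) (by omega), sub_self]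
            rwa [dotProduct_smul, smul_eq_mul] at this
          exact (hαunit.mul_right_eq_zero).mp hz
        · have : i = m := by omega
          subst this
          rw [mul_assoc, Ring.inverse_mul_cancel _ (hunit i (by omega)), mul_one, sub_self]
  -- pairwise orthogonality of r 0, ..., r n
  have orth : ∀ i ≤ n, ∀ j ≤ n, i ≠ j → r i ⬝ᵥ r j = 0 := by
    intro i hi j hj hij
    rcases Nat.lt_or_ge i j with h | h
    · rw [dotProduct_comm]; exact (key j hj).2.1 i h
    · exact (key i hi).2.1 j (by omega)
  -- R is nontrivial
  have : Nontrivial R := by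
    by_contra h
    rw [not_nontrivial_iff_subsingleton] at h
    exact hnz 0 (Nat.zero_le n) (Subsingleton.elim _ _)
  -- sums pull out of dot products
  have sumdot : ∀ (f : Fin (n + 1) → Fin n → R) (w : Fin n → R),
      (∑ i, f i) ⬝ᵥ w = ∑ i, f i ⬝ᵥ w := by
    intro f w
    simp only [dotProduct, Finset.sum_apply, Finset.sum_mul]
    exact Finset.sum_comm
  -- the residuals are linearly independent
  have li : LinearIndependent R (fun i : Fin (n + 1) => r i) := by
    rw [Fintype.linearIndependent_iff]
    intro g hg j
    have h0 : (∑ i, g i • r (i : ℕ)) ⬝ᵥ r j = 0 := by rw [hg, zero_dotProduct]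
    rw [sumdot] at h0
    have hsingle : ∀ i : Fin (n + 1), i ∈ Finset.univ → i ≠ j →
        (g i • r (i : ℕ)) ⬝ᵥ r (j : ℕ) = 0 := by
      intro i _ hij
      rw [smul_dotProduct, smul_eq_mul,
        orth i (by omega) j (by omega) (fun h => hij (Fin.ext h)), mul_zero]
    rw [Finset.sum_eq_single j (fun i _ hij => hsingle i (Finset.mem_univ i) hij)
      (fun h => absurd (Finset.mem_univ j) h)] at h0
    rw [smul_dotProduct, smul_eq_mul] at h0
    exact ((hrr j (by omega)).mul_left_eq_zero).mp h0
  -- contradiction: n+1 independent vectors in a rank-n free module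
  have hcard := li.fintype_card_le_finrank
  rw [Fintype.card_fin, Module.finrank_pi, Fintype.card_fin] at hcard
  omega
end
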